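/- Let P₆ denote the path graph on 6 vertices, and let P₆⁺ be its augmented pattern (a graph on 26 vertices). Then P₆⁺ admits a degenerate proper 3-coloring; that is, there is a proper 3-coloring c of P₆⁺ such that for every nonempty set S of vertices of P₆⁺ whose induced subgraph is not a triangle, there exists a vertex v ∈ S all of whose neighbors inside S receive the same color under c (vacuously so if v has no neighbors in S). -/
import Mathlib


open SimpleGraph

/-- Vertex type of the augmented pattern `H⁺`: the vertices of `H` together with two new
vertices `(s, false)` and `(s, true)` for every non-edge `s = {u,v}` of `H`. -/
abbrev AugVert {V : Type*} (H : SimpleGraph V) : Type _ :=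
  V ⊕ ({s : Sym2 V // ¬ s.IsDiag ∧ s ∉ H.edgeSet} × Bool)

/-- The augmented pattern `H⁺`: all edges of `H`, together with, for each non-edge
`{u,v}` of `H`, the four edges joining `u` and `v` to the two new vertices
`(⟨{u,v},_⟩, false)` and `(⟨{u,v},_⟩, true)`. -/
def augment {V : Type*} (H : SimpleGraph V) : SimpleGraph (AugVert H) :=
  SimpleGraph.fromRel (fun x y =>
    match x, y with
    | Sum.inl a, Sum.inl b => H.Adj a b
    | Sum.inl a, Sum.inr p => a ∈ p.1.1
    | _, _ => False)

instance : DecidableRel (SimpleGraph.pathGraph 6).Adj := fun _ _ =>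
  decidable_of_iff _ SimpleGraph.pathGraph_adj.symm

/-- Shorthand for the vertex type of `P₆⁺`. -/
abbrev AV := AugVert (SimpleGraph.pathGraph 6)

/-- An explicit decidable description of the base relation of `augment (pathGraph 6)`. -/
def relE : AV → AV → Prop
  | Sum.inl a, Sum.inl b => a.val + 1 = b.val ∨ b.val + 1 = a.val
  | Sum.inl a, Sum.inr p => a ∈ p.1.1
  | _, _ => False

instance : ∀ x y : AV, Decidable (relE x y) := fun x y => by
  rcases x with a | p <;> rcases y with b | q <;> simp only [relE] <;> infer_instance

lemma adj_iff (x y : AV) :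
    (augment (SimpleGraph.pathGraph 6)).Adj x y ↔ x ≠ y ∧ (relE x y ∨ relE y x) := by
  unfold augment
  rw [SimpleGraph.fromRel_adj]
  rcases x with a | p <;> rcases y with b | q <;>
    simp [relE, SimpleGraph.pathGraph_adj]

/-- Symmetric color table: color of the two added vertices of a non-edge `{a,b}`. -/
def colM : Fin 6 → Fin 6 → Fin 3 :=
  ![![0,0,1,2,1,1], ![0,0,0,2,0,2], ![1,0,0,0,1,1],
    ![2,2,0,0,0,2], ![1,0,1,0,0,0], ![1,2,1,2,0,0]]

/-- Symmetric rank table for added vertices. -/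
def rkM : Fin 6 → Fin 6 → ℕ :=
  ![![0,0,0,12,17,2], ![0,0,0,4,20,23], ![0,0,0,0,9,6],
    ![12,4,0,0,0,14], ![17,20,9,0,0,0], ![2,23,6,14,0,0]]

/-- The coloring of `P₆⁺`. -/
def cfun : AV → Fin 3
  | Sum.inl a => ![0,1,0,1,2,0] a
  | Sum.inr (s, _) => Sym2.lift ⟨colM, by decide⟩ s.1

/-- The elimination rank of each vertex of `P₆⁺`. -/
def rfun : AV → ℕ
  | Sum.inl a => ![16,22,8,11,19,25] a
  | Sum.inr (s, b) => Sym2.lift ⟨rkM, by decide⟩ s.1 + (if b then 1 else 0)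

lemma proper : ∀ v w : AV, relE v w ∨ relE w v → cfun v ≠ cfun w := by decide

lemma key : ∀ v w₁ w₂ : AV, (relE v w₁ ∨ relE w₁ v) → (relE v w₂ ∨ relE w₂ v) →
    rfun v ≤ rfun w₁ → rfun v ≤ rfun w₂ → cfun w₁ = cfun w₂ := by decide

/-- The augmented pattern `P₆⁺` of the path on 6 vertices admits a degenerate proper
3-coloring: a proper 3-coloring `c` such that every nonempty vertex set `S` whose
induced subgraph is not a triangle contains a vertex all of whose neighbors inside `S`
get the same color under `c`. -/
theorem augmentP6_degenerately_colorable :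
    ∃ c : (augment (SimpleGraph.pathGraph 6)).Coloring (Fin 3),
      ∀ S : Finset (AugVert (SimpleGraph.pathGraph 6)), S.Nonempty →
        ¬ (augment (SimpleGraph.pathGraph 6)).IsNClique 3 S →
        ∃ v ∈ S, ∀ w₁ ∈ S, ∀ w₂ ∈ S,
          (augment (SimpleGraph.pathGraph 6)).Adj v w₁ →
          (augment (SimpleGraph.pathGraph 6)).Adj v w₂ → c w₁ = c w₂ := by
  refine ⟨SimpleGraph.Coloring.mk cfun (fun {v w} h => proper v w ((adj_iff v w).mp h).2), ?_⟩
  intro S hS _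
  obtain ⟨v, hv, hmin⟩ := S.exists_min_image rfun hS
  refine ⟨v, hv, fun w₁ h1 w₂ h2 a1 a2 => ?_⟩
  exact key v w₁ w₂ ((adj_iff v w₁).mp a1).2 ((adj_iff v w₂).mp a2).2 (hmin w₁ h1) (hmin w₂ h2)
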